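/- Let l ≥ 1 be an integer and let s be a natural number with l+1 ≤ s ≤ 2l. A power series Φ ∈ k⟦X⟧ of order 1 satisfies Φ^{l+1} ≡ Φ′·X^{l+1} mod X^{s+1} (the Aczél–Jabotinsky equation with generator X^{l+1}, taken mod X^{s+1}) if and only if the coefficient c₁ of X in Φ satisfies c₁^l = 1 and the coefficient of X^j in Φ is 0 for every j with 2 ≤ j ≤ s−l. -/

import Mathlib

open PowerSeries
open Finset

variable {k : Type*} [Field k] [CharZero k]

omit [CharZero k] in
lemma my_coeff_derivativeFun (f : PowerSeries k) (n : ℕ) :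
    coeff n (derivativeFun f) = coeff (n + 1) f * (n + 1) :=
  coeff_derivative f n

omit [CharZero k] in
lemma my_shift (F : PowerSeries k) (j : ℕ) (h : ∀ i, i < j → coeff i F = 0) :
    ∃ S : PowerSeries k, F = S * X ^ j ∧ constantCoeff S = coeff j F := by
  refine ⟨mk fun n => coeff (n + j) F, ?_, ?_⟩
  · ext n
    rw [coeff_mul_X_pow']
    split_ifs with hn
    · rw [coeff_mk, Nat.sub_add_cancel hn]
    · exact h n (by omega)
  · rw [← coeff_zero_eq_constantCoeff_apply, coeff_mk, zero_add]

omit [CharZero k] in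
lemma my_expand (c : k) (S : PowerSeries k) (j n : ℕ) :
    (C c * X + S * X ^ j) ^ n =
      ∑ i ∈ range (n + 1),
        (Nat.choose n i : PowerSeries k) * (C (c ^ i) * S ^ (n - i)) * X ^ (i + j * (n - i)) := by
  rw [add_pow]
  refine Finset.sum_congr rfl fun i _ => ?_
  rw [mul_pow, mul_pow, ← pow_mul, map_pow]
  ring

omit [CharZero k] in
lemma my_coeff_pow (c : k) (S : PowerSeries k) (l j : ℕ) (hj : 2 ≤ j) (hjl : j ≤ l) :
    coeff (l + j) ((C c * X + S * X ^ j) ^ (l + 1)) =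
      ((l : k) + 1) * c ^ l * constantCoeff S := by
  rw [my_expand, map_sum]
  rw [Finset.sum_eq_single_of_mem l (Finset.mem_range.mpr (by omega))]
  · rw [show l + 1 - l = 1 from by omega, pow_one, mul_one, coeff_mul_X_pow', if_pos le_rfl,
      Nat.sub_self, coeff_zero_eq_constantCoeff_apply, map_mul, map_mul, map_natCast,
      constantCoeff_C, Nat.choose_succ_self_right]
    push_cast
    ring
  · intro i hi hne
    rw [Finset.mem_range] at hi
    by_cases hi1 : i = l + 1
    · subst hi1
      simp only [Nat.sub_self, pow_zero, mul_one, mul_zero, add_zero, Nat.choose_self,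
        Nat.cast_one, one_mul]
      rw [coeff_mul_X_pow', if_pos (by omega), coeff_C, if_neg (by omega)]
    · have hil : i < l := by omega
      rw [coeff_mul_X_pow', if_neg]
      have h5 : j * (l + 1 - i) = j * (l - i) + j := by
        rw [show l + 1 - i = (l - i) + 1 from by omega, Nat.mul_add, Nat.mul_one]
      have h4 : 2 * (l - i) ≤ j * (l - i) := Nat.mul_le_mul_right _ hj
      rw [h5]
      set A := j * (l - i) with hA
      omega

/-- For `l+1 ≤ s ≤ 2l`, an order-1 series `Φ` satisfies the truncated
Aczél–Jabotinsky equation `Φ^(l+1) ≡ Φ′·X^(l+1) mod X^(s+1)` (generator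
`X^(l+1)`) iff its linear coefficient is an `l`-th root of unity and its
coefficients at `X^j` vanish for `2 ≤ j ≤ s-l`. -/
theorem aczel_jabotinsky_truncated_monomial_generator (l s : ℕ)
    (hl : 1 ≤ l) (hs1 : l + 1 ≤ s) (hs2 : s ≤ 2 * l)
    (Φ : PowerSeries k)
    (hΦ0 : constantCoeff Φ = 0) (hΦ1 : coeff 1 Φ ≠ 0) :
    (X : PowerSeries k) ^ (s + 1) ∣ Φ ^ (l + 1) - derivativeFun Φ * X ^ (l + 1) ↔
      (coeff 1 Φ) ^ l = 1 ∧ ∀ j, 2 ≤ j → j ≤ s - l → coeff j Φ = 0 := by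
  constructor
  · intro h
    rw [X_pow_dvd_iff] at h
    have heq : ∀ n, n ≤ s →
        coeff n (Φ ^ (l + 1)) = coeff n (derivativeFun Φ * X ^ (l + 1)) := by
      intro n hn
      have := h n (by omega)
      rw [map_sub, sub_eq_zero] at this
      exact this
    have hc : (coeff 1 Φ) ^ l = 1 := by
      obtain ⟨Ψ, hΨ, hΨ0⟩ := my_shift Φ 1 (fun i hi => by
        obtain rfl : i = 0 := by omega
        simpa using hΦ0)
      rw [pow_one] at hΨ
      have hpow : Φ ^ (l + 1) = Ψ ^ (l + 1) * X ^ (l + 1) := by rw [hΨ, mul_pow]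
      have hLc : coeff (l + 1) (Φ ^ (l + 1)) = (coeff 1 Φ) ^ (l + 1) := by
        rw [hpow, coeff_mul_X_pow', if_pos le_rfl, Nat.sub_self,
          coeff_zero_eq_constantCoeff_apply, map_pow, hΨ0]
      have hRc : coeff (l + 1) (derivativeFun Φ * X ^ (l + 1)) = coeff 1 Φ := by
        rw [coeff_mul_X_pow', if_pos le_rfl, Nat.sub_self, my_coeff_derivativeFun, zero_add]
        norm_num
      have h1 := (hLc.symm.trans ((heq (l + 1) (by omega)).trans hRc))
      have h2 : (coeff 1 Φ) ^ l * coeff 1 Φ = 1 * coeff 1 Φ := by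
        rw [← pow_succ, one_mul]; exact h1
      exact mul_right_cancel₀ hΦ1 h2
    refine ⟨hc, ?_⟩
    intro j
    induction j using Nat.strong_induction_on with
    | _ j ih =>
      intro hj2 hjs
      have hcoefflt : ∀ i, i < j → coeff i (Φ - C (coeff 1 Φ) * X) = 0 := by
        intro i hi
        rw [map_sub, coeff_C_mul, coeff_X]
        rcases Nat.lt_or_ge i 2 with h2 | h2
        · interval_cases i
          · simp [hΦ0]
          · simp
        · rw [ih i hi h2 (by omega), if_neg (by omega)]
          simp
      obtain ⟨S, hS, hS0⟩ := my_shift _ j hcoefflt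
      have hΦeq : Φ = C (coeff 1 Φ) * X + S * X ^ j := by rw [← hS]; ring
      have hS0' : constantCoeff S = coeff j Φ := by
        rw [hS0, map_sub, coeff_C_mul, coeff_X, if_neg (by omega)]
        simp
      have hL : coeff (l + j) (Φ ^ (l + 1)) =
          ((l : k) + 1) * (coeff 1 Φ) ^ l * constantCoeff S := by
        conv_lhs => rw [hΦeq]
        exact my_coeff_pow _ S l j hj2 (by omega)
      have hR : coeff (l + j) (derivativeFun Φ * X ^ (l + 1)) = coeff j Φ * j := by
        rw [coeff_mul_X_pow', if_pos (by omega), show l + j - (l + 1) = j - 1 from by omega,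
          my_coeff_derivativeFun, ← Nat.cast_add_one, show j - 1 + 1 = j from by omega]
      have e := hL.symm.trans ((heq (l + j) (by omega)).trans hR)
      rw [hc, hS0'] at e
      have hfin : ((l : k) + 1 - j) * coeff j Φ = 0 := by linear_combination e
      have hne : ((l : k) + 1 - j) ≠ 0 := by
        have hcast : ((l + 1 : ℕ) : k) ≠ ((j : ℕ) : k) := by
          rw [Ne, Nat.cast_inj]; omega
        push_cast at hcast
        intro h0
        exact hcast (sub_eq_zero.mp h0)
      exact (mul_eq_zero.mp hfin).resolve_left hne
  · rintro ⟨hc, hz⟩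
    obtain ⟨c, hcdef⟩ : ∃ c, coeff 1 Φ = c := ⟨_, rfl⟩
    rw [hcdef] at hc hΦ1
    have hcoefflt : ∀ i, i < (s - l) + 1 → coeff i (Φ - C c * X) = 0 := by
      intro i hi
      rw [map_sub, coeff_C_mul, coeff_X]
      rcases Nat.lt_or_ge i 2 with h2 | h2
      · interval_cases i
        · simp [hΦ0]
        · simp [hcdef]
      · rw [hz i h2 (by omega), if_neg (by omega)]
        simp
    obtain ⟨S, hS, -⟩ := my_shift _ ((s - l) + 1) hcoefflt
    have hΦeq : Φ = C c * X + S * X ^ ((s - l) + 1) := by rw [← hS]; ring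
    have d1 : (X : PowerSeries k) ^ (s + 1) ∣ Φ ^ (l + 1) - C c * X ^ (l + 1) := by
      rw [hΦeq, my_expand, Finset.sum_range_succ]
      simp only [Nat.sub_self, pow_zero, mul_one, mul_zero, add_zero, Nat.choose_self,
        Nat.cast_one, one_mul]
      rw [show c ^ (l + 1) = c from by rw [pow_succ, hc, one_mul], add_sub_cancel_right]
      refine Finset.dvd_sum fun i hi => ?_
      rw [Finset.mem_range] at hi
      have hle : s + 1 ≤ i + ((s - l) + 1) * (l + 1 - i) := by
        have h5 : ((s - l) + 1) * (l + 1 - i) = ((s - l) + 1) * (l - i) + ((s - l) + 1) := by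
          rw [show l + 1 - i = (l - i) + 1 from by omega, Nat.mul_add, Nat.mul_one]
        have h4 : l - i ≤ ((s - l) + 1) * (l - i) := Nat.le_mul_of_pos_left _ (by omega)
        rw [h5]
        set A := ((s - l) + 1) * (l - i) with hA
        omega
      exact Dvd.dvd.mul_left (pow_dvd_pow X hle) _
    have d2 : (X : PowerSeries k) ^ (s + 1) ∣
        derivativeFun Φ * X ^ (l + 1) - C c * X ^ (l + 1) := by
      rw [← sub_mul]
      have hdvd : (X : PowerSeries k) ^ (s - l) ∣ derivativeFun Φ - C c := by
        rw [X_pow_dvd_iff]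
        intro n hn
        rw [map_sub, my_coeff_derivativeFun, coeff_C]
        rcases Nat.eq_zero_or_pos n with rfl | hn0
        · simp [hcdef]
        · rw [hz (n + 1) (by omega) (by omega), if_neg (by omega)]
          simp
      have hXeq : (X : PowerSeries k) ^ (s + 1) = X ^ (s - l) * X ^ (l + 1) := by
        rw [← pow_add]; congr 1; omega
      rw [hXeq]
      exact mul_dvd_mul hdvd dvd_rfl
    have hsplit : Φ ^ (l + 1) - derivativeFun Φ * X ^ (l + 1) =
        (Φ ^ (l + 1) - C c * X ^ (l + 1)) -
          (derivativeFun Φ * X ^ (l + 1) - C c * X ^ (l + 1)) := by ring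
    rw [hsplit]
    exact dvd_sub d1 d2
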